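/- Let a: [0,∞) → [0,1] and o: [0,∞) → [0,1] be measurable nonincreasing functions supported on a bounded interval, let p ≥ 1, L ≥ 1 and β > p. Suppose that for all i ≥ 0: L·a(i) ≥ Lβ·∫_i^∞ (a(t) − o(t/(Lβ)))/t dt. Then p·∫₀^∞ t^{p-1} a(t) dt ≤ (L^p · β^{p+1}/(β − p)) · p·∫₀^∞ t^{p-1} o(t) dt. -/

import Mathlib

open MeasureTheory Set
open scoped ENNReal

namespace Stmt6Aux

/-- Integrability of `t ^ (p-1) * f t` on `Ioi 0` for bounded `f` with bounded support. -/
lemma integrableOn_rpow_mul {f : ℝ → ℝ} (hf : Measurable f) {p T' : ℝ} (hp : 1 ≤ p)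
    (hT' : 0 < T') (hb : ∀ t, 0 < t → |f t| ≤ 1) (hs : ∀ t, T' ≤ t → f t = 0) :
    IntegrableOn (fun t => t ^ (p - 1) * f t) (Set.Ioi 0) := by
  have hmeas : Measurable fun t : ℝ => t ^ (p - 1) * f t := by fun_prop
  have hgint : Integrable ((Set.Ioo (0:ℝ) T').indicator fun _ => T' ^ (p - 1)) := by
    rw [integrable_indicator_iff measurableSet_Ioo]
    exact integrableOn_const measure_Ioo_lt_top.ne
  refine Integrable.mono' hgint.integrableOn hmeas.aestronglyMeasurable ?_
  filter_upwards [ae_restrict_mem measurableSet_Ioi] with t ht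
  have ht0 : (0:ℝ) < t := ht
  rcases lt_or_ge t T' with h | h
  · rw [Set.indicator_of_mem (Set.mem_Ioo.mpr ⟨ht0, h⟩)]
    rw [Real.norm_eq_abs, abs_mul, abs_of_nonneg (Real.rpow_nonneg ht0.le _)]
    calc t ^ (p - 1) * |f t| ≤ t ^ (p - 1) * 1 :=
          mul_le_mul_of_nonneg_left (hb t ht0) (Real.rpow_nonneg ht0.le _)
      _ = t ^ (p - 1) := mul_one _
      _ ≤ T' ^ (p - 1) := Real.rpow_le_rpow ht0.le h.le (by linarith)
  · rw [hs t h]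
    simp only [mul_zero, norm_zero]
    exact Set.indicator_nonneg (fun _ _ => Real.rpow_nonneg hT'.le _) _

/-- Integrability of `f t / t` on `Ioi i` for `i > 0`. -/
lemma integrableOn_div_Ioi {f : ℝ → ℝ} (hf : Measurable f) {i T' : ℝ} (hi : 0 < i)
    (hb : ∀ t, 0 < t → 0 ≤ f t ∧ f t ≤ 1) (hs : ∀ t, T' ≤ t → f t = 0) :
    IntegrableOn (fun t => f t / t) (Set.Ioi i) := by
  have hmeas : Measurable fun t : ℝ => f t / t := hf.div measurable_id
  have hgint : Integrable ((Set.Ioo i T').indicator fun _ => i⁻¹) := by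
    rw [integrable_indicator_iff measurableSet_Ioo]
    exact integrableOn_const measure_Ioo_lt_top.ne
  refine Integrable.mono' hgint.integrableOn hmeas.aestronglyMeasurable ?_
  filter_upwards [ae_restrict_mem measurableSet_Ioi] with t ht
  have hti : i < t := ht
  have ht0 : (0:ℝ) < t := hi.trans hti
  rcases lt_or_ge t T' with h | h
  · rw [Set.indicator_of_mem (Set.mem_Ioo.mpr ⟨hti, h⟩)]
    rw [Real.norm_eq_abs, abs_of_nonneg (div_nonneg (hb t ht0).1 ht0.le)]
    calc f t / t ≤ 1 / i := div_le_div₀ zero_le_one (hb t ht0).2 hi hti.le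
      _ = i⁻¹ := one_div i
  · rw [hs t h]
    simp only [zero_div, norm_zero]
    exact Set.indicator_nonneg (fun _ _ => inv_nonneg.2 hi.le) _

/-- `∫⁻ i in Ioo 0 t, i^(p-1) = t^p / p` (in `ℝ≥0∞`). -/
lemma lint_Ioo {p : ℝ} (hp : 1 ≤ p) {t : ℝ} (ht : 0 ≤ t) :
    ∫⁻ i in Set.Ioo 0 t, ENNReal.ofReal (i ^ (p - 1)) = ENNReal.ofReal (t ^ p / p) := by
  have hr : (-1 : ℝ) < p - 1 := by linarith
  have hint : IntegrableOn (fun i : ℝ => i ^ (p - 1)) (Set.Ioo 0 t) := by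
    have := intervalIntegral.intervalIntegrable_rpow' (a := 0) (b := t) hr
    rwa [intervalIntegrable_iff_integrableOn_Ioo_of_le ht] at this
  rw [← ofReal_integral_eq_lintegral_ofReal hint ?_]
  · congr 1
    have h2 : ∫ i in Set.Ioo 0 t, i ^ (p - 1) = ∫ i in (0:ℝ)..t, i ^ (p - 1) := by
      rw [intervalIntegral.integral_of_le ht, integral_Ioc_eq_integral_Ioo]
    rw [h2, integral_rpow (Or.inl hr)]
    have hp0 : p ≠ 0 := by linarith
    simp [sub_add_cancel, Real.zero_rpow hp0]
  · filter_upwards [ae_restrict_mem measurableSet_Ioo] with i hi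
    exact Real.rpow_nonneg hi.1.le _

/-- Fubini step: swapping the order of integration. -/
lemma fubini {f : ℝ → ℝ} (hf : Measurable f) {p : ℝ} (hp : 1 ≤ p) :
    ∫⁻ i in Set.Ioi 0, ENNReal.ofReal (i ^ (p - 1)) * ∫⁻ t in Set.Ioi i, ENNReal.ofReal (f t / t)
      = ENNReal.ofReal p⁻¹ * ∫⁻ t in Set.Ioi 0, ENNReal.ofReal (t ^ (p - 1) * f t) := by
  have hp0 : (0:ℝ) < p := lt_of_lt_of_le one_pos hp
  set g : ℝ → ℝ≥0∞ := fun t => ENNReal.ofReal (f t / t) with hgdef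
  have hg : Measurable g := (hf.div measurable_id).ennreal_ofReal
  set F : ℝ × ℝ → ℝ≥0∞ := fun q =>
    if q.1 < q.2 then ENNReal.ofReal (q.1 ^ (p - 1)) * g q.2 else 0 with hFdef
  have hFmeas : Measurable F := by
    apply Measurable.ite (measurableSet_lt measurable_fst measurable_snd)
    · exact (Measurable.ennreal_ofReal (by fun_prop)).mul (hg.comp measurable_snd)
    · exact measurable_const
  have hrow : ∀ i ∈ Set.Ioi (0:ℝ),
      (∫⁻ t in Set.Ioi 0, F (i, t))
        = ENNReal.ofReal (i ^ (p - 1)) * ∫⁻ t in Set.Ioi i, g t := by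
    intro i hi
    have heq : ∀ t : ℝ, F (i, t)
        = (Set.Ioi i).indicator (fun t => ENNReal.ofReal (i ^ (p - 1)) * g t) t := by
      intro t
      simp [hFdef, Set.indicator_apply, Set.mem_Ioi]
    rw [lintegral_congr heq, lintegral_indicator measurableSet_Ioi,
      Measure.restrict_restrict measurableSet_Ioi,
      Set.inter_eq_self_of_subset_left (Set.Ioi_subset_Ioi (le_of_lt hi)),
      lintegral_const_mul' _ _ ENNReal.ofReal_ne_top]
  have hcol : ∀ t ∈ Set.Ioi (0:ℝ),
      (∫⁻ i in Set.Ioi 0, F (i, t))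
        = ENNReal.ofReal (p⁻¹ * (t ^ (p - 1) * f t)) := by
    intro t ht
    have ht0 : (0:ℝ) < t := ht
    have heq : ∀ i : ℝ, F (i, t)
        = (Set.Iio t).indicator (fun i => ENNReal.ofReal (i ^ (p - 1)) * g t) i := by
      intro i
      simp [hFdef, Set.indicator_apply, Set.mem_Iio]
    rw [lintegral_congr heq, lintegral_indicator measurableSet_Iio,
      Measure.restrict_restrict measurableSet_Iio, Set.Iio_inter_Ioi,
      lintegral_mul_const' _ _ ENNReal.ofReal_ne_top, lint_Ioo hp ht0.le,
      ← ENNReal.ofReal_mul (div_nonneg (Real.rpow_nonneg ht0.le _) hp0.le)]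
    congr 1
    rw [show t ^ (p - 1) = t ^ p / t by rw [Real.rpow_sub ht0, Real.rpow_one]]
    ring
  calc ∫⁻ i in Set.Ioi 0, ENNReal.ofReal (i ^ (p - 1)) * ∫⁻ t in Set.Ioi i, g t
      = ∫⁻ i in Set.Ioi 0, ∫⁻ t in Set.Ioi 0, F (i, t) :=
        (setLIntegral_congr_fun measurableSet_Ioi
          (fun i hi => (hrow i hi).symm))
    _ = ∫⁻ t in Set.Ioi 0, ∫⁻ i in Set.Ioi 0, F (i, t) := by
        exact lintegral_lintegral_swap hFmeas.aemeasurable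
    _ = ∫⁻ t in Set.Ioi 0, ENNReal.ofReal (p⁻¹ * (t ^ (p - 1) * f t)) :=
        setLIntegral_congr_fun measurableSet_Ioi
          (fun t ht => hcol t ht)
    _ = ENNReal.ofReal p⁻¹ * ∫⁻ t in Set.Ioi 0, ENNReal.ofReal (t ^ (p - 1) * f t) := by
        rw [← lintegral_const_mul' _ _ ENNReal.ofReal_ne_top]
        exact lintegral_congr fun t => ENNReal.ofReal_mul (inv_nonneg.2 hp0.le)

/-- Change of variables `t = c y` on `Ioi 0`. -/
lemma scaling (o : ℝ → ℝ) {p c : ℝ} (hp : 1 ≤ p) (hc : 0 < c) :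
    ∫ t in Set.Ioi (0:ℝ), t ^ (p - 1) * o (t / c)
      = c ^ p * ∫ y in Set.Ioi (0:ℝ), y ^ (p - 1) * o y := by
  have h := integral_comp_mul_left_Ioi (fun x => x ^ (p - 1) * o (x / c)) 0 hc
  simp only [mul_zero, smul_eq_mul] at h
  have h2 : ∫ x in Set.Ioi (0:ℝ), (c * x) ^ (p - 1) * o (c * x / c)
      = c⁻¹ * ∫ x in Set.Ioi (0:ℝ), x ^ (p - 1) * o (x / c) := h
  have h3 : ∫ x in Set.Ioi (0:ℝ), (c * x) ^ (p - 1) * o (c * x / c)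
      = c ^ (p - 1) * ∫ x in Set.Ioi (0:ℝ), x ^ (p - 1) * o x := by
    rw [← integral_const_mul]
    apply setIntegral_congr_fun measurableSet_Ioi
    intro x hx
    have hx0 : (0:ℝ) < x := hx
    show (c * x) ^ (p - 1) * o (c * x / c) = c ^ (p - 1) * (x ^ (p - 1) * o x)
    rw [Real.mul_rpow hc.le hx0.le, mul_div_cancel_left₀ _ hc.ne']
    ring
  have hcpp : c ^ p = c * c ^ (p - 1) := by
    have h4 := Real.rpow_add hc 1 (p - 1)
    rw [Real.rpow_one] at h4
    rw [show (1 : ℝ) + (p - 1) = p by ring] at h4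
    exact h4
  have h5 := h3.symm.trans h2
  have hLHS : (∫ t in Set.Ioi (0:ℝ), t ^ (p - 1) * o (t / c))
      = c * (c ^ (p - 1) * ∫ x in Set.Ioi (0:ℝ), x ^ (p - 1) * o x) := by
    rw [h5]
    field_simp
  rw [hLHS, hcpp, mul_assoc]

end Stmt6Aux

open Stmt6Aux

/-- Wrap-up inequality: if the nonincreasing non-completion probabilities `a, o : [0,∞) → [0,1]`
(with bounded support) satisfy `L·a(i) ≥ Lβ·∫_i^∞ (a(t) − o(t/(Lβ)))/t dt` for all `i ≥ 0`, then
`p·∫₀^∞ t^{p-1} a(t) dt ≤ (L^p β^{p+1}/(β − p)) · p·∫₀^∞ t^{p-1} o(t) dt`. -/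
theorem stmt_6 (a o : ℝ → ℝ) (ha_meas : Measurable a) (ho_meas : Measurable o)
    (ha_range : ∀ t, 0 ≤ t → a t ∈ Set.Icc (0 : ℝ) 1)
    (ho_range : ∀ t, 0 ≤ t → o t ∈ Set.Icc (0 : ℝ) 1)
    (ha_mono : ∀ s t, 0 ≤ s → s ≤ t → a t ≤ a s)
    (ho_mono : ∀ s t, 0 ≤ s → s ≤ t → o t ≤ o s)
    (T : ℝ) (hT : 0 < T) (ha_supp : ∀ t, T ≤ t → a t = 0) (ho_supp : ∀ t, T ≤ t → o t = 0)
    (p L β : ℝ) (hp : 1 ≤ p) (hL : 1 ≤ L) (hβ : p < β)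
    (hkey : ∀ i : ℝ, 0 ≤ i →
      L * β * ∫ t in Set.Ioi i, (a t - o (t / (L * β))) / t ≤ L * a i) :
    p * ∫ t in Set.Ioi (0 : ℝ), t ^ (p - 1) * a t ≤
      (L ^ p * β ^ (p + 1) / (β - p)) * (p * ∫ t in Set.Ioi (0 : ℝ), t ^ (p - 1) * o t) := by
  have hp0 : (0:ℝ) < p := lt_of_lt_of_le one_pos hp
  have hβ0 : (0:ℝ) < β := lt_trans hp0 hβ
  have hL0 : (0:ℝ) < L := lt_of_lt_of_le one_pos hL
  set c : ℝ := L * β with hcdef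
  have hc0 : (0:ℝ) < c := mul_pos hL0 hβ0
  have hoc_meas : Measurable fun t : ℝ => o (t / c) := ho_meas.comp (measurable_id.div_const c)
  have ha_range' : ∀ t, 0 < t → 0 ≤ a t ∧ a t ≤ 1 := fun t ht =>
    ⟨(ha_range t ht.le).1, (ha_range t ht.le).2⟩
  have ho_range' : ∀ t, 0 < t → 0 ≤ o t ∧ o t ≤ 1 := fun t ht =>
    ⟨(ho_range t ht.le).1, (ho_range t ht.le).2⟩
  have hoc_range : ∀ t, 0 < t → 0 ≤ o (t / c) ∧ o (t / c) ≤ 1 := fun t ht =>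
    ho_range' (t / c) (div_pos ht hc0)
  have hoc_supp : ∀ t, c * T ≤ t → o (t / c) = 0 := by
    intro t h
    apply ho_supp
    rw [le_div_iff₀ hc0]
    linarith
  have hcT0 : (0:ℝ) < c * T := mul_pos hc0 hT
  -- integrability
  have inta : IntegrableOn (fun t => t ^ (p - 1) * a t) (Set.Ioi 0) :=
    integrableOn_rpow_mul ha_meas hp hT
      (fun t ht => abs_le.2 ⟨by linarith [(ha_range' t ht).1], (ha_range' t ht).2⟩) ha_supp
  have into : IntegrableOn (fun t => t ^ (p - 1) * o t) (Set.Ioi 0) :=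
    integrableOn_rpow_mul ho_meas hp hT
      (fun t ht => abs_le.2 ⟨by linarith [(ho_range' t ht).1], (ho_range' t ht).2⟩) ho_supp
  have intoc : IntegrableOn (fun t => t ^ (p - 1) * o (t / c)) (Set.Ioi 0) :=
    integrableOn_rpow_mul hoc_meas hp hcT0
      (fun t ht => abs_le.2 ⟨by linarith [(hoc_range t ht).1], (hoc_range t ht).2⟩) hoc_supp
  set A : ℝ := ∫ t in Set.Ioi (0:ℝ), t ^ (p - 1) * a t with hAdef
  set O : ℝ := ∫ t in Set.Ioi (0:ℝ), t ^ (p - 1) * o t with hOdef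
  have hA0 : 0 ≤ A := setIntegral_nonneg measurableSet_Ioi fun t ht =>
    mul_nonneg (Real.rpow_nonneg (le_of_lt ht) _) (ha_range' t ht).1
  have hO0 : 0 ≤ O := setIntegral_nonneg measurableSet_Ioi fun t ht =>
    mul_nonneg (Real.rpow_nonneg (le_of_lt ht) _) (ho_range' t ht).1
  have hA' : ENNReal.ofReal A = ∫⁻ t in Set.Ioi 0, ENNReal.ofReal (t ^ (p - 1) * a t) := by
    rw [hAdef]
    apply ofReal_integral_eq_lintegral_ofReal inta
    filter_upwards [ae_restrict_mem measurableSet_Ioi] with t ht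
    exact mul_nonneg (Real.rpow_nonneg (le_of_lt ht) _) (ha_range' t ht).1
  have hC' : ENNReal.ofReal (c ^ p * O)
      = ∫⁻ t in Set.Ioi 0, ENNReal.ofReal (t ^ (p - 1) * o (t / c)) := by
    rw [hOdef, ← scaling o hp hc0]
    apply ofReal_integral_eq_lintegral_ofReal intoc
    filter_upwards [ae_restrict_mem measurableSet_Ioi] with t ht
    exact mul_nonneg (Real.rpow_nonneg (le_of_lt ht) _) (hoc_range t ht).1
  -- pointwise key inequality in ℝ≥0∞
  have key : ∀ i ∈ Set.Ioi (0:ℝ),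
      ENNReal.ofReal β * ∫⁻ t in Set.Ioi i, ENNReal.ofReal (a t / t)
        ≤ ENNReal.ofReal (a i)
          + ENNReal.ofReal β * ∫⁻ t in Set.Ioi i, ENNReal.ofReal (o (t / c) / t) := by
    intro i hi
    have hi0 : (0:ℝ) < i := hi
    have ia : IntegrableOn (fun t => a t / t) (Set.Ioi i) :=
      integrableOn_div_Ioi ha_meas hi0 ha_range' ha_supp
    have io : IntegrableOn (fun t => o (t / c) / t) (Set.Ioi i) :=
      integrableOn_div_Ioi hoc_meas hi0 hoc_range hoc_supp
    have hsplit : (∫ t in Set.Ioi i, (a t - o (t / c)) / t)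
        = (∫ t in Set.Ioi i, a t / t) - ∫ t in Set.Ioi i, o (t / c) / t := by
      rw [← integral_sub ia io]
      exact setIntegral_congr_fun measurableSet_Ioi fun t _ => sub_div _ _ _
    have hk := hkey i hi0.le
    rw [hsplit] at hk
    have h1 : β * ((∫ t in Set.Ioi i, a t / t) - ∫ t in Set.Ioi i, o (t / c) / t) ≤ a i := by
      apply le_of_mul_le_mul_left _ hL0
      calc L * (β * ((∫ t in Set.Ioi i, a t / t) - ∫ t in Set.Ioi i, o (t / c) / t))
          = L * β * ((∫ t in Set.Ioi i, a t / t) - ∫ t in Set.Ioi i, o (t / c) / t) :=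
            (mul_assoc _ _ _).symm
        _ ≤ L * a i := hk
    have hRa : 0 ≤ ∫ t in Set.Ioi i, a t / t :=
      setIntegral_nonneg measurableSet_Ioi fun t ht =>
        div_nonneg (ha_range' t (hi0.trans ht)).1 (le_of_lt (hi0.trans ht))
    have hRo : 0 ≤ ∫ t in Set.Ioi i, o (t / c) / t :=
      setIntegral_nonneg measurableSet_Ioi fun t ht =>
        div_nonneg (hoc_range t (hi0.trans ht)).1 (le_of_lt (hi0.trans ht))
    have hai : 0 ≤ a i := (ha_range' i hi0).1
    have ea : ENNReal.ofReal (∫ t in Set.Ioi i, a t / t)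
        = ∫⁻ t in Set.Ioi i, ENNReal.ofReal (a t / t) := by
      apply ofReal_integral_eq_lintegral_ofReal ia
      filter_upwards [ae_restrict_mem measurableSet_Ioi] with t ht
      exact div_nonneg (ha_range' t (hi0.trans ht)).1 (le_of_lt (hi0.trans ht))
    have eo : ENNReal.ofReal (∫ t in Set.Ioi i, o (t / c) / t)
        = ∫⁻ t in Set.Ioi i, ENNReal.ofReal (o (t / c) / t) := by
      apply ofReal_integral_eq_lintegral_ofReal io
      filter_upwards [ae_restrict_mem measurableSet_Ioi] with t ht
      exact div_nonneg (hoc_range t (hi0.trans ht)).1 (le_of_lt (hi0.trans ht))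
    rw [← ea, ← eo, ← ENNReal.ofReal_mul hβ0.le, ← ENNReal.ofReal_mul hβ0.le,
      ← ENNReal.ofReal_add hai (mul_nonneg hβ0.le hRo)]
    exact ENNReal.ofReal_le_ofReal (by linarith)
  -- integrate the key inequality
  have mono : ∫⁻ i in Set.Ioi 0, ENNReal.ofReal (i ^ (p - 1))
        * (ENNReal.ofReal β * ∫⁻ t in Set.Ioi i, ENNReal.ofReal (a t / t))
      ≤ ∫⁻ i in Set.Ioi 0, ENNReal.ofReal (i ^ (p - 1))
        * (ENNReal.ofReal (a i)
            + ENNReal.ofReal β * ∫⁻ t in Set.Ioi i, ENNReal.ofReal (o (t / c) / t)) := by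
    apply lintegral_mono_ae
    filter_upwards [ae_restrict_mem measurableSet_Ioi] with i hi
    exact mul_le_mul_right (key i hi) _
  have lhs_eq : ∫⁻ i in Set.Ioi 0, ENNReal.ofReal (i ^ (p - 1))
        * (ENNReal.ofReal β * ∫⁻ t in Set.Ioi i, ENNReal.ofReal (a t / t))
      = ENNReal.ofReal β * (ENNReal.ofReal p⁻¹
          * ∫⁻ t in Set.Ioi 0, ENNReal.ofReal (t ^ (p - 1) * a t)) := by
    calc ∫⁻ i in Set.Ioi 0, ENNReal.ofReal (i ^ (p - 1))
          * (ENNReal.ofReal β * ∫⁻ t in Set.Ioi i, ENNReal.ofReal (a t / t))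
        = ∫⁻ i in Set.Ioi 0, ENNReal.ofReal β * (ENNReal.ofReal (i ^ (p - 1))
            * ∫⁻ t in Set.Ioi i, ENNReal.ofReal (a t / t)) :=
          lintegral_congr fun i => by rw [mul_left_comm]
      _ = ENNReal.ofReal β * ∫⁻ i in Set.Ioi 0, ENNReal.ofReal (i ^ (p - 1))
            * ∫⁻ t in Set.Ioi i, ENNReal.ofReal (a t / t) :=
          lintegral_const_mul' _ _ ENNReal.ofReal_ne_top
      _ = _ := by rw [fubini ha_meas hp]
  have rhs_eq : ∫⁻ i in Set.Ioi 0, ENNReal.ofReal (i ^ (p - 1))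
        * (ENNReal.ofReal (a i)
            + ENNReal.ofReal β * ∫⁻ t in Set.Ioi i, ENNReal.ofReal (o (t / c) / t))
      = (∫⁻ t in Set.Ioi 0, ENNReal.ofReal (t ^ (p - 1) * a t))
        + ENNReal.ofReal β * (ENNReal.ofReal p⁻¹
            * ∫⁻ t in Set.Ioi 0, ENNReal.ofReal (t ^ (p - 1) * o (t / c))) := by
    have hmeas1 : Measurable fun i : ℝ => ENNReal.ofReal (i ^ (p - 1)) * ENNReal.ofReal (a i) :=
      (Measurable.ennreal_ofReal (by fun_prop)).mul ha_meas.ennreal_ofReal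
    calc ∫⁻ i in Set.Ioi 0, ENNReal.ofReal (i ^ (p - 1))
          * (ENNReal.ofReal (a i)
              + ENNReal.ofReal β * ∫⁻ t in Set.Ioi i, ENNReal.ofReal (o (t / c) / t))
        = ∫⁻ i in Set.Ioi 0, (ENNReal.ofReal (i ^ (p - 1)) * ENNReal.ofReal (a i)
            + ENNReal.ofReal β * (ENNReal.ofReal (i ^ (p - 1))
                * ∫⁻ t in Set.Ioi i, ENNReal.ofReal (o (t / c) / t))) :=
          lintegral_congr fun i => by rw [mul_add, mul_left_comm]
      _ = (∫⁻ i in Set.Ioi 0, ENNReal.ofReal (i ^ (p - 1)) * ENNReal.ofReal (a i))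
            + ∫⁻ i in Set.Ioi 0, ENNReal.ofReal β * (ENNReal.ofReal (i ^ (p - 1))
                * ∫⁻ t in Set.Ioi i, ENNReal.ofReal (o (t / c) / t)) :=
          lintegral_add_left hmeas1 _
      _ = _ := by
          rw [lintegral_const_mul' _ _ ENNReal.ofReal_ne_top, fubini hoc_meas hp]
          congr 1
          apply setLIntegral_congr_fun measurableSet_Ioi
          intro i hi
          exact (ENNReal.ofReal_mul (Real.rpow_nonneg (le_of_lt hi) _)).symm
  rw [lhs_eq, rhs_eq, ← hA', ← hC'] at mono
  -- back to the reals
  have hXO : (0:ℝ) ≤ β * (p⁻¹ * (c ^ p * O)) :=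
    mul_nonneg hβ0.le (mul_nonneg (inv_nonneg.2 hp0.le)
      (mul_nonneg (Real.rpow_nonneg hc0.le _) hO0))
  rw [← ENNReal.ofReal_mul (inv_nonneg.2 hp0.le), ← ENNReal.ofReal_mul hβ0.le,
    ← ENNReal.ofReal_mul (inv_nonneg.2 hp0.le), ← ENNReal.ofReal_mul hβ0.le,
    ← ENNReal.ofReal_add hA0 hXO] at mono
  have real_ineq : β * (p⁻¹ * A) ≤ A + β * (p⁻¹ * (c ^ p * O)) :=
    (ENNReal.ofReal_le_ofReal_iff (add_nonneg hA0 hXO)).mp mono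
  -- final algebra
  have hmul := mul_le_mul_of_nonneg_left real_ineq hp0.le
  have hpp : p * p⁻¹ = 1 := mul_inv_cancel₀ hp0.ne'
  rw [show p * (β * (p⁻¹ * A)) = p * p⁻¹ * (β * A) by ring, hpp, one_mul,
    show p * (A + β * (p⁻¹ * (c ^ p * O))) = p * A + p * p⁻¹ * (β * (c ^ p * O)) by ring,
    hpp, one_mul] at hmul
  have hc_pow : c ^ p = L ^ p * β ^ p := Real.mul_rpow hL0.le hβ0.le
  have hβp1 : β ^ (p + 1) = β ^ p * β := Real.rpow_add_one hβ0.ne' p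
  rw [hc_pow] at hmul
  rw [hβp1, div_mul_eq_mul_div, le_div_iff₀ (by linarith : (0:ℝ) < β - p)]
  nlinarith [mul_le_mul_of_nonneg_left hmul hp0.le]
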